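/- Let I ⊆ ℝ be an open interval, E ∈ ℂ, and let v : I → ℂ be differentiable. If f₁, f₂ : I → ℂ are twice differentiable and satisfy −fᵢ''(x) + (v(x) − E) fᵢ(x) = 0 on I for i = 1, 2, then the product Ξ(x) = f₁(x) f₂(x) is three times differentiable on I and satisfies Ξ'''(x) − 4 (v(x) − E) Ξ'(x) − 2 v'(x) Ξ(x) = 0 for all x ∈ I. -/

import Mathlib

open Set

theorem product_of_solutions_satisfies_third_order_equation
    (a b : ℝ) (E : ℂ) (v f₁ f₂ : ℝ → ℂ)
    (hv : ∀ x ∈ Ioo a b, DifferentiableAt ℝ v x)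
    (hf₁ : ∀ x ∈ Ioo a b, DifferentiableAt ℝ f₁ x)
    (hf₁' : ∀ x ∈ Ioo a b, DifferentiableAt ℝ (deriv f₁) x)
    (hf₂ : ∀ x ∈ Ioo a b, DifferentiableAt ℝ f₂ x)
    (hf₂' : ∀ x ∈ Ioo a b, DifferentiableAt ℝ (deriv f₂) x)
    (heq₁ : ∀ x ∈ Ioo a b, -(deriv (deriv f₁) x) + (v x - E) * f₁ x = 0)
    (heq₂ : ∀ x ∈ Ioo a b, -(deriv (deriv f₂) x) + (v x - E) * f₂ x = 0) :
    (∀ x ∈ Ioo a b, DifferentiableAt ℝ (fun y => f₁ y * f₂ y) x) ∧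
    (∀ x ∈ Ioo a b, DifferentiableAt ℝ (deriv (fun y => f₁ y * f₂ y)) x) ∧
    (∀ x ∈ Ioo a b, DifferentiableAt ℝ (deriv (deriv (fun y => f₁ y * f₂ y))) x) ∧
    (∀ x ∈ Ioo a b,
      deriv (deriv (deriv (fun y => f₁ y * f₂ y))) x
        - 4 * (v x - E) * deriv (fun y => f₁ y * f₂ y) x
        - 2 * deriv v x * (f₁ x * f₂ x) = 0) := by
  have hso : IsOpen (Ioo a b) := isOpen_Ioo
  set Ξ : ℝ → ℂ := fun y => f₁ y * f₂ y with hΞdef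
  set g : ℝ → ℂ := fun y => deriv f₁ y * f₂ y + f₁ y * deriv f₂ y with hgdef
  have hdΞ : ∀ x ∈ Ioo a b, DifferentiableAt ℝ Ξ x := fun x hx => (hf₁ x hx).mul (hf₂ x hx)
  have hΞg : ∀ x ∈ Ioo a b, deriv Ξ x = g x := by
    intro x hx
    exact deriv_mul (hf₁ x hx) (hf₂ x hx)
  have hgd : ∀ x ∈ Ioo a b, DifferentiableAt ℝ g x := fun x hx =>
    ((hf₁' x hx).mul (hf₂ x hx)).add ((hf₁ x hx).mul (hf₂' x hx))
  have hev : ∀ x ∈ Ioo a b, deriv Ξ =ᶠ[nhds x] g := fun x hx =>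
    Filter.eventuallyEq_of_mem (hso.mem_nhds hx) (fun y hy => hΞg y hy)
  have hdΞ' : ∀ x ∈ Ioo a b, DifferentiableAt ℝ (deriv Ξ) x := fun x hx =>
    (Filter.EventuallyEq.differentiableAt_iff (hev x hx)).mpr (hgd x hx)
  have hΞ''g : ∀ x ∈ Ioo a b, deriv (deriv Ξ) x = deriv g x := fun x hx =>
    (hev x hx).deriv_eq
  have hg' : ∀ x ∈ Ioo a b, deriv g x =
      deriv (deriv f₁) x * f₂ x + deriv f₁ x * deriv f₂ x
        + (deriv f₁ x * deriv f₂ x + f₁ x * deriv (deriv f₂) x) := by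
    intro x hx
    exact (((hf₁' x hx).hasDerivAt.mul (hf₂ x hx).hasDerivAt).add
      ((hf₁ x hx).hasDerivAt.mul (hf₂' x hx).hasDerivAt)).deriv
  set h : ℝ → ℂ := fun y => 2 * (v y - E) * (f₁ y * f₂ y)
      + 2 * (deriv f₁ y * deriv f₂ y) with hhdef
  have hΞ''h : ∀ x ∈ Ioo a b, deriv (deriv Ξ) x = h x := by
    intro x hx
    rw [hΞ''g x hx, hg' x hx]
    have e1 := heq₁ x hx
    have e2 := heq₂ x hx
    simp only [hhdef]
    linear_combination (-(f₂ x)) * e1 + (-(f₁ x)) * e2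
  have hhd : ∀ x ∈ Ioo a b, DifferentiableAt ℝ h x := fun x hx =>
    ((((hv x hx).sub_const E).const_mul 2).mul ((hf₁ x hx).mul (hf₂ x hx))).add
      (((hf₁' x hx).mul (hf₂' x hx)).const_mul 2)
  have hev2 : ∀ x ∈ Ioo a b, deriv (deriv Ξ) =ᶠ[nhds x] h := fun x hx =>
    Filter.eventuallyEq_of_mem (hso.mem_nhds hx) (fun y hy => hΞ''h y hy)
  have hdΞ'' : ∀ x ∈ Ioo a b, DifferentiableAt ℝ (deriv (deriv Ξ)) x := fun x hx =>
    (Filter.EventuallyEq.differentiableAt_iff (hev2 x hx)).mpr (hhd x hx)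
  have hh' : ∀ x ∈ Ioo a b, deriv h x =
      2 * deriv v x * (f₁ x * f₂ x)
        + 2 * (v x - E) * (deriv f₁ x * f₂ x + f₁ x * deriv f₂ x)
        + 2 * (deriv (deriv f₁) x * deriv f₂ x + deriv f₁ x * deriv (deriv f₂) x) := by
    intro x hx
    have hd : HasDerivAt h
        ((2 * deriv v x) * (f₁ x * f₂ x)
          + (2 * (v x - E)) * (deriv f₁ x * f₂ x + f₁ x * deriv f₂ x)
          + 2 * (deriv (deriv f₁) x * deriv f₂ x + deriv f₁ x * deriv (deriv f₂) x)) x := by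
      have h1 : HasDerivAt (fun y => 2 * (v y - E)) (2 * deriv v x) x :=
        (((hv x hx).hasDerivAt).sub_const E).const_mul 2
      have h2 : HasDerivAt (fun y => f₁ y * f₂ y)
          (deriv f₁ x * f₂ x + f₁ x * deriv f₂ x) x :=
        (hf₁ x hx).hasDerivAt.mul (hf₂ x hx).hasDerivAt
      have h3 : HasDerivAt (fun y => 2 * (deriv f₁ y * deriv f₂ y))
          (2 * (deriv (deriv f₁) x * deriv f₂ x + deriv f₁ x * deriv (deriv f₂) x)) x :=
        ((hf₁' x hx).hasDerivAt.mul (hf₂' x hx).hasDerivAt).const_mul 2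
      have := (h1.mul h2).add h3
      exact this
    rw [hd.deriv]
  refine ⟨hdΞ, hdΞ', hdΞ'', ?_⟩
  intro x hx
  have h3 : deriv (deriv (deriv Ξ)) x = deriv h x := (hev2 x hx).deriv_eq
  rw [h3, hh' x hx, hΞg x hx]
  have e1 := heq₁ x hx
  have e2 := heq₂ x hx
  simp only [hgdef]
  linear_combination (-2 * deriv f₂ x) * e1 + (-2 * deriv f₁ x) * e2
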